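/- Let φ be a conformal immersion on an open set U ⊆ ℝ² with conformal factor λ, with unit normal n := (φ_u × φ_v)/‖φ_u × φ_v‖, mean curvature H := ⟨Δφ, n⟩/(2λ²), and μ := (∂_z φ_z, n). Then the Gauss equation holds at every point of U: Δ(log λ) = 4|μ|²/λ² − λ² H², where Δ := ∂_uu + ∂_vv is the real Laplacian. -/

import Mathlib

open Complex

noncomputable section

/-- Euclidean 3-space. -/
abbrev E3 : Type := EuclideanSpace ℝ (Fin 3)

/-- Partial derivative in the first (u) coordinate direction. -/
def pu {F : Type} [NormedAddCommGroup F] [NormedSpace ℝ F]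
    (f : ℝ × ℝ → F) (p : ℝ × ℝ) : F := fderiv ℝ f p (1, 0)

/-- Partial derivative in the second (v) coordinate direction. -/
def pv {F : Type} [NormedAddCommGroup F] [NormedSpace ℝ F]
    (f : ℝ × ℝ → F) (p : ℝ × ℝ) : F := fderiv ℝ f p (0, 1)

/-- Cross product on ℝ³. -/
def cross (a b : E3) : E3 :=
  (WithLp.equiv 2 (Fin 3 → ℝ)).symm
    ![a 1 * b 2 - a 2 * b 1, a 2 * b 0 - a 0 * b 2, a 0 * b 1 - a 1 * b 0]

/-- The Euclidean inner product on ℝ³. -/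
def ip (a b : E3) : ℝ := @inner ℝ _ _ a b

/-- `φ` is a smooth conformal immersion on the open set `U ⊆ ℝ²` with
(smooth, positive) conformal factor `lam`:  ⟨φ_u,φ_u⟩ = λ², ⟨φ_v,φ_v⟩ = λ²,
⟨φ_u,φ_v⟩ = 0 at every point of `U`. -/
def IsConfImm (U : Set (ℝ × ℝ)) (φ : ℝ × ℝ → E3) (lam : ℝ × ℝ → ℝ) : Prop :=
  IsOpen U ∧ ContDiffOn ℝ (⊤ : ℕ∞) φ U ∧ ContDiffOn ℝ (⊤ : ℕ∞) lam U ∧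
    ∀ p ∈ U, 0 < lam p ∧
      ip (pu φ p) (pu φ p) = (lam p) ^ 2 ∧
      ip (pv φ p) (pv φ p) = (lam p) ^ 2 ∧
      ip (pu φ p) (pv φ p) = 0

/-- Complexification ℝ³ ↪ ℂ³. -/
def toC (x : E3) : Fin 3 → ℂ := fun j => (x j : ℂ)

/-- Complex-bilinear dot product on ℂ³:  (a,b) = Σⱼ aⱼ bⱼ. -/
def cdot (a b : Fin 3 → ℂ) : ℂ := ∑ j, a j * b j

/-- ∂_z = ½(∂_u − i ∂_v) for maps into complex normed spaces. -/
def dz {F : Type} [NormedAddCommGroup F] [NormedSpace ℂ F]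
    (f : ℝ × ℝ → F) (p : ℝ × ℝ) : F :=
  (2 : ℂ)⁻¹ • (pu f p - Complex.I • pv f p)

/-- ∂_z̄ = ½(∂_u + i ∂_v) for maps into complex normed spaces. -/
def dzbar {F : Type} [NormedAddCommGroup F] [NormedSpace ℂ F]
    (f : ℝ × ℝ → F) (p : ℝ × ℝ) : F :=
  (2 : ℂ)⁻¹ • (pu f p + Complex.I • pv f p)

/-- `f_z := ½(f_u − i f_v) ∈ ℂ³` for a real-vector-valued map `f` (in particular `φ_z`). -/
def phiz (f : ℝ × ℝ → E3) (p : ℝ × ℝ) : Fin 3 → ℂ :=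
  (2 : ℂ)⁻¹ • (toC (pu f p) - Complex.I • toC (pv f p))

/-- `f_z̄ := ½(f_u + i f_v) ∈ ℂ³` for a real-vector-valued map `f` (in particular `φ_z̄`). -/
def phizbar (f : ℝ × ℝ → E3) (p : ℝ × ℝ) : Fin 3 → ℂ :=
  (2 : ℂ)⁻¹ • (toC (pu f p) + Complex.I • toC (pv f p))

/-- The unit normal n = (φ_u × φ_v)/‖φ_u × φ_v‖. -/
def nvec (φ : ℝ × ℝ → E3) (p : ℝ × ℝ) : E3 :=
  ‖cross (pu φ p) (pv φ p)‖⁻¹ • cross (pu φ p) (pv φ p)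

/-- Componentwise Laplacian Δ = ∂_uu + ∂_vv. -/
def lap {F : Type} [NormedAddCommGroup F] [NormedSpace ℝ F]
    (f : ℝ × ℝ → F) (p : ℝ × ℝ) : F := pu (pu f) p + pv (pv f) p

/-- Mean curvature H = ⟨Δφ, n⟩/(2λ²). -/
def mcurv (φ : ℝ × ℝ → E3) (lam : ℝ × ℝ → ℝ) (p : ℝ × ℝ) : ℝ :=
  ip (lap φ p) (nvec φ p) / (2 * (lam p) ^ 2)

/-- μ := (∂_z φ_z, n). -/
def muQ (φ : ℝ × ℝ → E3) (p : ℝ × ℝ) : ℂ :=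
  cdot (dz (phiz φ) p) (toC (nvec φ p))

section Helpers

variable {F : Type} [NormedAddCommGroup F] [NormedSpace ℝ F]

lemma pu_congr {f g : ℝ × ℝ → F} {p : ℝ × ℝ} (h : f =ᶠ[nhds p] g) : pu f p = pu g p := by
  unfold pu; rw [Filter.EventuallyEq.fderiv_eq h]

lemma pv_congr {f g : ℝ × ℝ → F} {p : ℝ × ℝ} (h : f =ᶠ[nhds p] g) : pv f p = pv g p := by
  unfold pv; rw [Filter.EventuallyEq.fderiv_eq h]

lemma contDiffOn_pu {U : Set (ℝ × ℝ)} {f : ℝ × ℝ → F} (hU : IsOpen U)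
    (hf : ContDiffOn ℝ (⊤ : ℕ∞) f U) : ContDiffOn ℝ (⊤ : ℕ∞) (pu f) U := by
  have h1 : ContDiffOn ℝ (⊤ : ℕ∞) (fderiv ℝ f) U := hf.fderiv_of_isOpen hU (by simp)
  exact h1.clm_apply contDiffOn_const

lemma contDiffOn_pv {U : Set (ℝ × ℝ)} {f : ℝ × ℝ → F} (hU : IsOpen U)
    (hf : ContDiffOn ℝ (⊤ : ℕ∞) f U) : ContDiffOn ℝ (⊤ : ℕ∞) (pv f) U := by
  have h1 : ContDiffOn ℝ (⊤ : ℕ∞) (fderiv ℝ f) U := hf.fderiv_of_isOpen hU (by simp)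
  exact h1.clm_apply contDiffOn_const

lemma diffAt_of_cd {U : Set (ℝ × ℝ)} {f : ℝ × ℝ → F} (hU : IsOpen U)
    (hf : ContDiffOn ℝ (⊤ : ℕ∞) f U) {p : ℝ × ℝ} (hp : p ∈ U) :
    DifferentiableAt ℝ f p :=
  (hf.contDiffAt (hU.mem_nhds hp)).differentiableAt (by simp)

lemma symm_second {U : Set (ℝ × ℝ)} {f : ℝ × ℝ → F} (hU : IsOpen U)
    (hf : ContDiffOn ℝ (⊤ : ℕ∞) f U) {p : ℝ × ℝ} (hp : p ∈ U) :
    pu (pv f) p = pv (pu f) p := by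
  have hf' : ContDiffOn ℝ (⊤ : ℕ∞) (fderiv ℝ f) U := hf.fderiv_of_isOpen hU (by simp)
  have hd : DifferentiableAt ℝ (fderiv ℝ f) p := diffAt_of_cd hU hf' hp
  set f'' := fderiv ℝ (fderiv ℝ f) p with hf''
  have hev : ∀ᶠ y in nhds p, HasFDerivAt f (fderiv ℝ f y) y := by
    filter_upwards [hU.mem_nhds hp] with y hy
    exact (diffAt_of_cd hU hf hy).hasFDerivAt
  have hsym := second_derivative_symmetric_of_eventually hev hd.hasFDerivAt
  have hpu : ∀ w v : ℝ × ℝ, fderiv ℝ (fun q => fderiv ℝ f q w) p v = (f'' v) w := by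
    intro w v
    have : HasFDerivAt (fun q => fderiv ℝ f q w)
        ((ContinuousLinearMap.apply ℝ F w).comp f'') p :=
      (ContinuousLinearMap.apply ℝ F w).hasFDerivAt.comp p hd.hasFDerivAt
    rw [this.fderiv]; rfl
  show fderiv ℝ (fun q => fderiv ℝ f q (0,1)) p (1,0)
      = fderiv ℝ (fun q => fderiv ℝ f q (1,0)) p (0,1)
  rw [hpu, hpu, hsym]

end Helpers
section Alg

lemma ip_expand (a b : E3) : ip a b = a 0 * b 0 + a 1 * b 1 + a 2 * b 2 := by
  simp [ip, PiLp.inner_apply, RCLike.inner_apply, Fin.sum_univ_three, mul_comm]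

lemma crossE3_apply (a b : E3) :
    cross a b 0 = a 1 * b 2 - a 2 * b 1 ∧
    cross a b 1 = a 2 * b 0 - a 0 * b 2 ∧
    cross a b 2 = a 0 * b 1 - a 1 * b 0 := by
  refine ⟨?_, ?_, ?_⟩ <;> simp [cross, PiLp.toLp_apply]

lemma ip_cross_self_left (a b : E3) : ip (cross a b) a = 0 := by
  obtain ⟨h0, h1, h2⟩ := crossE3_apply a b
  rw [ip_expand, h0, h1, h2]; ring

lemma ip_cross_self_right (a b : E3) : ip (cross a b) b = 0 := by
  obtain ⟨h0, h1, h2⟩ := crossE3_apply a b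
  rw [ip_expand, h0, h1, h2]; ring

lemma ip_cross_cross (a b : E3) :
    ip (cross a b) (cross a b) = ip a a * ip b b - ip a b ^ 2 := by
  obtain ⟨h0, h1, h2⟩ := crossE3_apply a b
  rw [ip_expand, ip_expand, ip_expand, ip_expand, h0, h1, h2]; ring

/-- Parseval-type identity for the (scaled) orthogonal frame a, b, a×b. -/
lemma frame_expansion (a b x y : E3) :
    ip x (cross a b) * ip y (cross a b)
      = ip x y * (ip a a * ip b b - ip a b ^ 2)
        - ip b b * (ip x a * ip y a) - ip a a * (ip x b * ip y b)
        + ip a b * (ip x a * ip y b + ip x b * ip y a) := by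
  obtain ⟨h0, h1, h2⟩ := crossE3_apply a b
  simp only [ip_expand, h0, h1, h2]; ring

lemma ip_symm (a b : E3) : ip a b = ip b a := by rw [ip_expand, ip_expand]; ring

lemma norm_eq_ip (x : E3) : ‖x‖ = Real.sqrt (ip x x) := by
  rw [ip, real_inner_self_eq_norm_sq, Real.sqrt_sq (norm_nonneg x)]

lemma ip_smul_right (c : ℝ) (a b : E3) : ip a (c • b) = c * ip a b := by
  simp only [ip_expand]; simp [PiLp.smul_apply, smul_eq_mul]; ring

lemma cdot_toC (x y : E3) : cdot (toC x) (toC y) = (ip x y : ℂ) := by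
  simp [cdot, toC, Fin.sum_univ_three, ip_expand]

end Alg
section Calc

lemma pu_inner {f g : ℝ × ℝ → E3} {p : ℝ × ℝ}
    (hf : DifferentiableAt ℝ f p) (hg : DifferentiableAt ℝ g p) :
    pu (fun q => ip (f q) (g q)) p = ip (pu f p) (g p) + ip (f p) (pu g p) := by
  unfold pu ip
  rw [fderiv_inner_apply (𝕜 := ℝ) hf hg]
  exact add_comm _ _

lemma pv_inner {f g : ℝ × ℝ → E3} {p : ℝ × ℝ}
    (hf : DifferentiableAt ℝ f p) (hg : DifferentiableAt ℝ g p) :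
    pv (fun q => ip (f q) (g q)) p = ip (pv f p) (g p) + ip (f p) (pv g p) := by
  unfold pv ip
  rw [fderiv_inner_apply (𝕜 := ℝ) hf hg]
  exact add_comm _ _

lemma pu_mul {f g : ℝ × ℝ → ℝ} {p : ℝ × ℝ}
    (hf : DifferentiableAt ℝ f p) (hg : DifferentiableAt ℝ g p) :
    pu (fun q => f q * g q) p = pu f p * g p + f p * pu g p := by
  unfold pu
  rw [fderiv_fun_mul hf hg]; simp; ring

lemma pv_mul {f g : ℝ × ℝ → ℝ} {p : ℝ × ℝ}
    (hf : DifferentiableAt ℝ f p) (hg : DifferentiableAt ℝ g p) :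
    pv (fun q => f q * g q) p = pv f p * g p + f p * pv g p := by
  unfold pv
  rw [fderiv_fun_mul hf hg]; simp; ring

def toCL : E3 →L[ℝ] (Fin 3 → ℂ) :=
  ContinuousLinearMap.pi fun j => Complex.ofRealCLM.comp (EuclideanSpace.proj j)

lemma toCL_apply (x : E3) : toCL x = toC x := by
  funext j; rfl

lemma pu_toC {f : ℝ × ℝ → E3} {p : ℝ × ℝ} (hf : DifferentiableAt ℝ f p) :
    pu (fun q => toC (f q)) p = toC (pu f p) := by
  have h : HasFDerivAt (fun q => toCL (f q)) (toCL.comp (fderiv ℝ f p)) p :=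
    toCL.hasFDerivAt.comp p hf.hasFDerivAt
  unfold pu
  have : (fun q => toC (f q)) = fun q => toCL (f q) := by
    funext q; rw [toCL_apply]
  rw [this, h.fderiv]
  simp [toCL_apply]

lemma pv_toC {f : ℝ × ℝ → E3} {p : ℝ × ℝ} (hf : DifferentiableAt ℝ f p) :
    pv (fun q => toC (f q)) p = toC (pv f p) := by
  have h : HasFDerivAt (fun q => toCL (f q)) (toCL.comp (fderiv ℝ f p)) p :=
    toCL.hasFDerivAt.comp p hf.hasFDerivAt
  unfold pv
  have : (fun q => toC (f q)) = fun q => toCL (f q) := by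
    funext q; rw [toCL_apply]
  rw [this, h.fderiv]
  simp [toCL_apply]

lemma pu_csub {f g : ℝ × ℝ → Fin 3 → ℂ} {p : ℝ × ℝ}
    (hf : DifferentiableAt ℝ f p) (hg : DifferentiableAt ℝ g p) :
    pu (fun q => f q - g q) p = pu f p - pu g p := by
  unfold pu; rw [fderiv_fun_sub hf hg]; rfl

lemma pv_csub {f g : ℝ × ℝ → Fin 3 → ℂ} {p : ℝ × ℝ}
    (hf : DifferentiableAt ℝ f p) (hg : DifferentiableAt ℝ g p) :
    pv (fun q => f q - g q) p = pv f p - pv g p := by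
  unfold pv; rw [fderiv_fun_sub hf hg]; rfl

lemma pu_csmul (c : ℂ) {f : ℝ × ℝ → Fin 3 → ℂ} {p : ℝ × ℝ}
    (hf : DifferentiableAt ℝ f p) :
    pu (fun q => c • f q) p = c • pu f p := by
  unfold pu; rw [fderiv_fun_const_smul hf c]; rfl

lemma pv_csmul (c : ℂ) {f : ℝ × ℝ → Fin 3 → ℂ} {p : ℝ × ℝ}
    (hf : DifferentiableAt ℝ f p) :
    pv (fun q => c • f q) p = c • pv f p := by
  unfold pv; rw [fderiv_fun_const_smul hf c]; rfl

end Calc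
section MoreHelpers

lemma pu_const {F : Type} [NormedAddCommGroup F] [NormedSpace ℝ F] (c : F) (p : ℝ × ℝ) :
    pu (fun _ => c) p = 0 := by unfold pu; rw [fderiv_fun_const]; rfl

lemma pv_const {F : Type} [NormedAddCommGroup F] [NormedSpace ℝ F] (c : F) (p : ℝ × ℝ) :
    pv (fun _ => c) p = 0 := by unfold pv; rw [fderiv_fun_const]; rfl

lemma pu_neg {f : ℝ × ℝ → ℝ} (p : ℝ × ℝ) : pu (fun q => -(f q)) p = -(pu f p) := by
  unfold pu; rw [fderiv_fun_neg]; rfl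

lemma pv_neg {f : ℝ × ℝ → ℝ} (p : ℝ × ℝ) : pv (fun q => -(f q)) p = -(pv f p) := by
  unfold pv; rw [fderiv_fun_neg]; rfl

lemma ip_add_left (a b x : E3) : ip (a + b) x = ip a x + ip b x := by
  simp only [ip_expand, PiLp.add_apply]; ring

lemma diff_toC {f : ℝ × ℝ → E3} {p : ℝ × ℝ} (hf : DifferentiableAt ℝ f p) :
    DifferentiableAt ℝ (fun q => toC (f q)) p := by
  have : (fun q => toC (f q)) = fun q => toCL (f q) := by
    funext q; rw [toCL_apply]
  rw [this]
  exact toCL.differentiableAt.comp p hf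

lemma cdot_smul (c : ℂ) (a b : Fin 3 → ℂ) : cdot (c • a) b = c * cdot a b := by
  simp [cdot, Fin.sum_univ_three, Pi.smul_apply, smul_eq_mul]; ring

lemma cdot_sub (a b x : Fin 3 → ℂ) : cdot (a - b) x = cdot a x - cdot b x := by
  simp [cdot, Fin.sum_univ_three, Pi.sub_apply]; ring

end MoreHelpers


/-- Gauss equation: Δ(log λ) = 4|μ|²/λ² − λ² H². -/
theorem conformal_gauss_equation
    (U : Set (ℝ × ℝ)) (φ : ℝ × ℝ → E3) (lam : ℝ × ℝ → ℝ)
    (h : IsConfImm U φ lam) :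
    ∀ p ∈ U,
      lap (fun q => Real.log (lam q)) p
        = 4 * ‖muQ φ p‖ ^ 2 / (lam p) ^ 2
          - (lam p) ^ 2 * (mcurv φ lam p) ^ 2 := by
  obtain ⟨hU, hφ, hlam, hpt⟩ := h
  -- smoothness of derivatives
  have hφu : ContDiffOn ℝ (⊤ : ℕ∞) (pu φ) U := contDiffOn_pu hU hφ
  have hφv : ContDiffOn ℝ (⊤ : ℕ∞) (pv φ) U := contDiffOn_pv hU hφ
  have hφuu : ContDiffOn ℝ (⊤ : ℕ∞) (pu (pu φ)) U := contDiffOn_pu hU hφu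
  have hφuv : ContDiffOn ℝ (⊤ : ℕ∞) (pu (pv φ)) U := contDiffOn_pu hU hφv
  have hlamu : ContDiffOn ℝ (⊤ : ℕ∞) (pu lam) U := contDiffOn_pu hU hlam
  have hlamv : ContDiffOn ℝ (⊤ : ℕ∞) (pv lam) U := contDiffOn_pv hU hlam
  -- first-order conformal identities, valid on all of U
  have hsq : (fun q => (lam q) ^ 2) = fun q => lam q * lam q := by funext q; ring
  have hsymφ : ∀ q ∈ U, pu (pv φ) q = pv (pu φ) q := fun q hq => symm_second hU hφ hq
  have hG1 : ∀ q ∈ U, ip (pu φ q) (pu φ q) = lam q * lam q := by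
    intro q hq; rw [(hpt q hq).2.1]; ring
  have hG2 : ∀ q ∈ U, ip (pv φ q) (pv φ q) = lam q * lam q := by
    intro q hq; rw [(hpt q hq).2.2.1]; ring
  have hG3 : ∀ q ∈ U, ip (pu φ q) (pv φ q) = 0 := fun q hq => (hpt q hq).2.2.2
  -- derivatives of the Gram identities at any point of U
  have keyA : ∀ q ∈ U,
      ip (pu (pu φ) q) (pu φ q) = lam q * pu lam q ∧
      ip (pu (pv φ) q) (pu φ q) = lam q * pv lam q ∧
      ip (pu (pv φ) q) (pv φ q) = lam q * pu lam q ∧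
      ip (pv (pv φ) q) (pv φ q) = lam q * pv lam q ∧
      ip (pu (pu φ) q) (pv φ q) = -(lam q * pv lam q) ∧
      ip (pv (pv φ) q) (pu φ q) = -(lam q * pu lam q) := by
    intro q hq
    have dE : DifferentiableAt ℝ (pu φ) q := diffAt_of_cd hU hφu hq
    have dF : DifferentiableAt ℝ (pv φ) q := diffAt_of_cd hU hφv hq
    have dl : DifferentiableAt ℝ lam q := diffAt_of_cd hU hlam hq
    have memq := hU.mem_nhds hq
    have e1 : (fun r => ip (pu φ r) (pu φ r)) =ᶠ[nhds q] (fun r => lam r * lam r) :=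
      Filter.eventuallyEq_of_mem memq hG1
    have e2 : (fun r => ip (pv φ r) (pv φ r)) =ᶠ[nhds q] (fun r => lam r * lam r) :=
      Filter.eventuallyEq_of_mem memq hG2
    have e3 : (fun r => ip (pu φ r) (pv φ r)) =ᶠ[nhds q] (fun _ => (0:ℝ)) :=
      Filter.eventuallyEq_of_mem memq hG3
    have a1 : ip (pu (pu φ) q) (pu φ q) = lam q * pu lam q := by
      have t := pu_congr e1
      rw [pu_inner dE dE, pu_mul dl dl, ip_symm (pu φ q) (pu (pu φ) q)] at t
      linarith
    have a2 : ip (pu (pv φ) q) (pu φ q) = lam q * pv lam q := by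
      have t := pv_congr e1
      rw [pv_inner dE dE, pv_mul dl dl, ← hsymφ q hq,
        ip_symm (pu φ q) (pu (pv φ) q)] at t
      linarith
    have a3 : ip (pu (pv φ) q) (pv φ q) = lam q * pu lam q := by
      have t := pu_congr e2
      rw [pu_inner dF dF, pu_mul dl dl, ip_symm (pv φ q) (pu (pv φ) q)] at t
      linarith
    have a4 : ip (pv (pv φ) q) (pv φ q) = lam q * pv lam q := by
      have t := pv_congr e2
      rw [pv_inner dF dF, pv_mul dl dl, ip_symm (pv φ q) (pv (pv φ) q)] at t
      linarith
    have a5 : ip (pu (pu φ) q) (pv φ q) = -(lam q * pv lam q) := by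
      have t := pu_congr e3
      rw [pu_inner dE dF, pu_const, ip_symm (pu φ q) (pu (pv φ) q)] at t
      linarith
    have a6 : ip (pv (pv φ) q) (pu φ q) = -(lam q * pu lam q) := by
      have t := pv_congr e3
      rw [pv_inner dE dF, pv_const, ← hsymφ q hq,
        ip_symm (pu φ q) (pv (pv φ) q)] at t
      linarith
    exact ⟨a1, a2, a3, a4, a5, a6⟩
  intro p hp
  have dφu : DifferentiableAt ℝ (pu φ) p := diffAt_of_cd hU hφu hp
  have dφv : DifferentiableAt ℝ (pv φ) p := diffAt_of_cd hU hφv hp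
  have dφuu : DifferentiableAt ℝ (pu (pu φ)) p := diffAt_of_cd hU hφuu hp
  have dφuv : DifferentiableAt ℝ (pu (pv φ)) p := diffAt_of_cd hU hφuv hp
  have dlam : DifferentiableAt ℝ lam p := diffAt_of_cd hU hlam hp
  have dlamu : DifferentiableAt ℝ (pu lam) p := diffAt_of_cd hU hlamu hp
  have dlamv : DifferentiableAt ℝ (pv lam) p := diffAt_of_cd hU hlamv hp
  set e := pu φ p with he
  set f := pv φ p with hf
  set A := pu (pu φ) p with hA
  set B := pv (pv φ) p with hB
  set C := pu (pv φ) p with hC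
  set l := lam p with hl
  set lu := pu lam p with hlu
  set lv := pv lam p with hlv
  set luu := pu (pu lam) p with hluu
  set lvv := pv (pv lam) p with hlvv
  have hlpos : 0 < l := (hpt p hp).1
  have hlne : l ≠ 0 := ne_of_gt hlpos
  set n := nvec φ p with hn
  set L := ip A n with hL
  set M := ip C n with hM
  set N := ip B n with hN
  obtain ⟨a1, a2, a3, a4, a5, a6⟩ := keyA p hp
  simp only [← he, ← hf, ← hA, ← hB, ← hC, ← hl, ← hlu, ← hlv] at a1 a2 a3 a4 a5 a6
  -- norm of the cross product and the frame expansion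
  have hcross2 : ip (cross e f) (cross e f) = (l*l) * (l*l) := by
    rw [ip_cross_cross, hG1 p hp, hG2 p hp, hG3 p hp]; ring
  have hcrossnorm : ‖cross e f‖ = l^2 := by
    rw [norm_eq_ip, hcross2]
    rw [show (l*l)*(l*l) = (l^2)^2 by ring]
    exact Real.sqrt_sq (by positivity)
  have hip_n : ∀ x : E3, ip x n = ip x (cross e f) / l^2 := by
    intro x
    rw [hn]
    show ip x (‖cross (pu φ p) (pv φ p)‖⁻¹ • cross (pu φ p) (pv φ p)) = _
    rw [ip_smul_right, ← he, ← hf, hcrossnorm]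
    field_simp
  have frame : ∀ x y : E3,
      ip x y = (ip x e * ip y e + ip x f * ip y f) / (l*l) + ip x n * ip y n := by
    intro x y
    have h0 := frame_expansion e f x y
    rw [hG1 p hp, hG2 p hp, hG3 p hp] at h0
    rw [hip_n x, hip_n y]
    have h0' : ip x (cross e f) * ip y (cross e f)
        = ip x y * ((l*l)*(l*l)) - (l*l)*(ip x e * ip y e) - (l*l)*(ip x f * ip y f) := by
      rw [h0]; ring
    have hll : l*l ≠ 0 := mul_ne_zero hlne hlne
    have hstep : (ip x (cross e f) / l^2) * (ip y (cross e f) / l^2)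
        = (ip x (cross e f) * ip y (cross e f)) / ((l*l)*(l*l)) := by
      rw [show (l:ℝ)^2 = l*l by ring]; field_simp
    rw [hstep, h0']
    field_simp
    ring
  have cAB : ip A B = -(lu*lu) - lv*lv + L*N := by
    rw [frame A B, ← hL, ← hN, a1, a5, a6, a4]
    field_simp
    ring
  have cCC : ip C C = lu*lu + lv*lv + M*M := by
    rw [frame C C, ← hM, a2, a3]
    field_simp
    ring
  -- the third-derivative (commutation) identity
  have key : M*M - L*N = l*(luu + lvv) - lu*lu - lv*lv := by
    have memp := hU.mem_nhds hp
    have d3 : pv (pu (pu φ)) p = pu (pu (pv φ)) p := by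
      have h1 : pu (pv (pu φ)) p = pv (pu (pu φ)) p := symm_second hU hφu hp
      have h2 : pv (pu φ) =ᶠ[nhds p] pu (pv φ) :=
        Filter.eventuallyEq_of_mem memp (fun q hq => (hsymφ q hq).symm)
      rw [← h1, pu_congr h2]
    have d1 : pv (fun q => ip (pu (pu φ) q) (pv φ q)) p
        = ip (pu (pu (pv φ)) p) f + ip A B := by
      rw [pv_inner dφuu dφv, ← d3]
    have d2 : pu (fun q => ip (pu (pv φ) q) (pv φ q)) p
        = ip (pu (pu (pv φ)) p) f + ip C C := by
      rw [pu_inner dφuv dφv]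
    have ev1 : (fun q => ip (pu (pu φ) q) (pv φ q)) =ᶠ[nhds p]
        (fun q => -(lam q * pv lam q)) :=
      Filter.eventuallyEq_of_mem memp (fun q hq => (keyA q hq).2.2.2.2.1)
    have ev2 : (fun q => ip (pu (pv φ) q) (pv φ q)) =ᶠ[nhds p]
        (fun q => lam q * pu lam q) :=
      Filter.eventuallyEq_of_mem memp (fun q hq => (keyA q hq).2.2.1)
    have d1' : pv (fun q => ip (pu (pu φ) q) (pv φ q)) p = -(lv*lv + l*lvv) := by
      rw [pv_congr ev1, pv_neg, pv_mul dlam dlamv]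
    have d2' : pu (fun q => ip (pu (pv φ) q) (pv φ q)) p = lu*lu + l*luu := by
      rw [pu_congr ev2, pu_mul dlam dlamu]
    rw [d1'] at d1
    rw [d2'] at d2
    rw [cAB] at d1
    rw [cCC] at d2
    linarith
  -- Laplacian of log lam
  have hlog_u : ∀ q ∈ U, pu (fun r => Real.log (lam r)) q = (lam q)⁻¹ * pu lam q := by
    intro q hq
    have dl : DifferentiableAt ℝ lam q := diffAt_of_cd hU hlam hq
    have hne : lam q ≠ 0 := ne_of_gt (hpt q hq).1
    have hlog := dl.hasFDerivAt.log hne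
    unfold pu
    rw [hlog.fderiv]
    rfl
  have hlog_v : ∀ q ∈ U, pv (fun r => Real.log (lam r)) q = (lam q)⁻¹ * pv lam q := by
    intro q hq
    have dl : DifferentiableAt ℝ lam q := diffAt_of_cd hU hlam hq
    have hne : lam q ≠ 0 := ne_of_gt (hpt q hq).1
    have hlog := dl.hasFDerivAt.log hne
    unfold pv
    rw [hlog.fderiv]
    rfl
  have hhinv : HasFDerivAt (fun q => (lam q)⁻¹)
      ((-(((lam p)^2)⁻¹)) • fderiv ℝ lam p) p :=
    (hasDerivAt_inv hlne).comp_hasFDerivAt p dlam.hasFDerivAt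
  have dinv : DifferentiableAt ℝ (fun q => (lam q)⁻¹) p := hhinv.differentiableAt
  have hinvu : pu (fun q => (lam q)⁻¹) p = -((l^2)⁻¹) * lu := by
    unfold pu
    rw [hhinv.fderiv]
    show -(((lam p)^2)⁻¹) • (fderiv ℝ lam p (1,0)) = _
    simp only [smul_eq_mul, ← hl, ← hlu]
    rfl
  have hinvv : pv (fun q => (lam q)⁻¹) p = -((l^2)⁻¹) * lv := by
    unfold pv
    rw [hhinv.fderiv]
    show -(((lam p)^2)⁻¹) • (fderiv ℝ lam p (0,1)) = _
    simp only [smul_eq_mul, ← hl, ← hlv]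
    rfl
  have hloglap : lap (fun q => Real.log (lam q)) p
      = (l*(luu+lvv) - lu*lu - lv*lv) / (l*l) := by
    have evu : pu (fun r => Real.log (lam r)) =ᶠ[nhds p]
        (fun q => (lam q)⁻¹ * pu lam q) :=
      Filter.eventuallyEq_of_mem (hU.mem_nhds hp) hlog_u
    have evv : pv (fun r => Real.log (lam r)) =ᶠ[nhds p]
        (fun q => (lam q)⁻¹ * pv lam q) :=
      Filter.eventuallyEq_of_mem (hU.mem_nhds hp) hlog_v
    unfold lap
    rw [pu_congr evu, pv_congr evv, pu_mul dinv dlamu, pv_mul dinv dlamv, hinvu, hinvv]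
    simp only [← hl, ← hlu, ← hlv, ← hluu, ← hlvv]
    field_simp
    ring
  -- mean curvature
  have hH : mcurv φ lam p = (L + N) / (2*l^2) := by
    unfold mcurv
    have hlapφ : lap φ p = A + B := rfl
    rw [hlapφ, ip_add_left, ← hn, ← hL, ← hN, ← hl]
  -- mu
  have dtoCu : DifferentiableAt ℝ (fun q => toC (pu φ q)) p := diff_toC dφu
  have dtoCv : DifferentiableAt ℝ (fun q => toC (pv φ q)) p := diff_toC dφv
  have hphiz : phiz φ = fun q => (2:ℂ)⁻¹ • (toC (pu φ q) - Complex.I • toC (pv φ q)) := rfl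
  have dphizin : DifferentiableAt ℝ
      (fun q => toC (pu φ q) - Complex.I • toC (pv φ q)) p :=
    dtoCu.sub (dtoCv.const_smul Complex.I)
  have hpu_phiz : pu (phiz φ) p = (2:ℂ)⁻¹ • (toC A - Complex.I • toC C) := by
    rw [hphiz, pu_csmul _ dphizin, pu_csub (g := fun q => Complex.I • toC (pv φ q)) dtoCu (dtoCv.const_smul Complex.I),
      pu_csmul _ dtoCv, pu_toC dφu, pu_toC dφv, ← hA, ← hC]
  have hpv_phiz : pv (phiz φ) p = (2:ℂ)⁻¹ • (toC C - Complex.I • toC B) := by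
    rw [hphiz, pv_csmul _ dphizin, pv_csub (g := fun q => Complex.I • toC (pv φ q)) dtoCu (dtoCv.const_smul Complex.I),
      pv_csmul _ dtoCv, pv_toC dφu, pv_toC dφv, ← symm_second hU hφ hp, ← hB, ← hC]
  have hdz : dz (phiz φ) p = (2:ℂ)⁻¹ • ((2:ℂ)⁻¹ • (toC A - Complex.I • toC C)
      - Complex.I • ((2:ℂ)⁻¹ • (toC C - Complex.I • toC B))) := by
    unfold dz
    rw [hpu_phiz, hpv_phiz]
  have hmu : muQ φ p = (((L-N)/4 : ℝ) : ℂ) + ((-(M/2) : ℝ) : ℂ) * Complex.I := by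
    unfold muQ
    rw [hdz, ← hn]
    simp only [cdot_smul, cdot_sub, smul_sub, cdot_toC]
    simp only [← hL, ← hM, ← hN]
    push_cast
    linear_combination ((N:ℂ)/4) * Complex.I_sq
  have hmusq : ‖muQ φ p‖ ^ 2 = ((L-N)/4)^2 + (M/2)^2 := by
    rw [hmu, Complex.sq_norm, Complex.normSq_add_mul_I]
    ring
  rw [hloglap, hH, hmusq, ← key]
  field_simp
  ring
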